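/- Let (Ω, ℱ, ℙ) be a probability space, let (U_t)_{t≥1} be a sequence of i.i.d. integrable real random variables with U_t ≤ 0 almost surely, let δ ∈ (0,1), and let (δ_n)_{n≥1} be a non-decreasing sequence of [0,1]-valued random variables such that liminf_{n→∞} δ_n ≥ δ almost surely. Define the quantile q_U(β) = inf{u ∈ ℝ : ℙ(U₁ ≤ u) ≥ β} for β ∈ [0,1]. Then, almost surely, limsup_{n→∞} sup{ (1/n) ∑_{t∈S} U_t : S ⊆ {1,…,n}, |S| ≥ δ_n · n } ≤ E[U₁ · 1_{U₁ > q_U(1−δ)}]. -/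

import Mathlib

open MeasureTheory ProbabilityTheory Filter

/-- The `β`-quantile of a real random variable `V`:
`q_V(β) = inf {u ∈ ℝ : ℙ(V ≤ u) ≥ β}`. -/
noncomputable def rvQuantile {Ω : Type*} [MeasurableSpace Ω] (μ : Measure Ω)
    (V : Ω → ℝ) (β : ℝ) : ℝ :=
  sInf {u : ℝ | ENNReal.ofReal β ≤ μ {ω | V ω ≤ u}}

/-- Let `(U_t)` be i.i.d. integrable non-positive real random variables,
`δ ∈ (0,1)`, and `(δ_n)` a non-decreasing sequence of `[0,1]`-valued random variables with
`liminf δ_n ≥ δ` a.s. Then, almost surely,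
`limsup_n sup{ (1/n) ∑_{t∈S} U_t : S ⊆ {1,…,n}, |S| ≥ δ_n n } ≤ E[U₁ 1_{U₁ > q_U(1−δ)}]`. -/
theorem stmt6 {Ω : Type*} [MeasurableSpace Ω] (μ : Measure Ω) [IsProbabilityMeasure μ]
    (U : ℕ → Ω → ℝ) (hmeas : ∀ t, Measurable (U t))
    (hindep : iIndepFun U μ)
    (hident : ∀ t, IdentDistrib (U t) (U 1) μ μ)
    (hint : Integrable (U 1) μ)
    (hnonpos : ∀ t, ∀ᵐ ω ∂μ, U t ω ≤ 0)
    (δ : ℝ) (hδ : δ ∈ Set.Ioo (0:ℝ) 1)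
    (δseq : ℕ → Ω → ℝ) (hδmeas : ∀ n, Measurable (δseq n))
    (hδ01 : ∀ n ω, δseq n ω ∈ Set.Icc (0:ℝ) 1)
    (hδmono : ∀ ω, Monotone fun n => δseq n ω)
    (hliminf : ∀ᵐ ω ∂μ, δ ≤ liminf (fun n => δseq n ω) atTop) :
    ∀ᵐ ω ∂μ,
      limsup (fun n : ℕ => sSup {v : ℝ | ∃ S : Finset ℕ, S ⊆ Finset.Icc 1 n ∧
          δseq n ω * n ≤ (S.card : ℝ) ∧ v = (1 / (n : ℝ)) * ∑ t ∈ S, U t ω}) atTop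
        ≤ ∫ ω', Set.indicator {ω'' | rvQuantile μ (U 1) (1 - δ) < U 1 ω''} (U 1) ω' ∂μ := by
  obtain ⟨hδ0, hδ1⟩ := hδ
  set q : ℝ := rvQuantile μ (U 1) (1 - δ) with hqdef
  set Sq : Set ℝ := {u : ℝ | ENNReal.ofReal (1 - δ) ≤ μ {ω | U 1 ω ≤ u}} with hSqdef
  have hofpos : 0 < ENNReal.ofReal (1 - δ) := ENNReal.ofReal_pos.2 (by linarith)
  -- Sq is upward closed
  have hSqmono : ∀ u v : ℝ, u ≤ v → u ∈ Sq → v ∈ Sq := by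
    intro u v huv hu
    exact hu.trans (measure_mono fun ω hω => le_trans hω huv)
  -- 0 ∈ Sq
  have hU1one : μ {ω | U 1 ω ≤ 0} = 1 := by
    have h0 : μ {ω | U 1 ω ≤ 0}ᶜ = 0 := by
      simpa [ae_iff, Set.compl_setOf] using hnonpos 1
    have h1 : (1 : ENNReal) = μ Set.univ := (measure_univ).symm
    refine le_antisymm prob_le_one ?_
    calc (1:ENNReal) = μ Set.univ := h1
      _ ≤ μ {ω | U 1 ω ≤ 0} + μ {ω | U 1 ω ≤ 0}ᶜ := by
          rw [← Set.union_compl_self {ω | U 1 ω ≤ 0}]; exact measure_union_le _ _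
      _ = μ {ω | U 1 ω ≤ 0} := by rw [h0, add_zero]
  have h0mem : (0:ℝ) ∈ Sq := by
    simp only [hSqdef, Set.mem_setOf_eq, hU1one]
    exact ENNReal.ofReal_le_one.2 (by linarith)
  have hSqne : Sq.Nonempty := ⟨0, h0mem⟩
  -- Sq is bounded below
  have hSqbdd : BddBelow Sq := by
    by_contra hb
    have hall : ∀ n : ℕ, (-(n:ℝ)) ∈ Sq := by
      intro n
      rw [not_bddBelow_iff] at hb
      obtain ⟨u, hu, hul⟩ := hb (-(n:ℝ))
      exact hSqmono u _ hul.le hu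
    have hmeas' : ∀ n : ℕ, NullMeasurableSet {ω | U 1 ω ≤ -(n:ℝ)} μ :=
      fun n => ((hmeas 1) measurableSet_Iic).nullMeasurableSet
    have hanti : Antitone (fun n : ℕ => {ω | U 1 ω ≤ -(n:ℝ)}) := by
      intro m n hmn ω hω
      simp only [Set.mem_setOf_eq] at *
      have : -(n:ℝ) ≤ -(m:ℝ) := by exact_mod_cast neg_le_neg (Nat.cast_le.2 hmn)
      linarith
    have hempty : (⋂ n : ℕ, {ω | U 1 ω ≤ -(n:ℝ)}) = ∅ := by
      ext ω
      simp only [Set.mem_iInter, Set.mem_setOf_eq, Set.mem_empty_iff_false, iff_false, not_forall]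
      obtain ⟨n, hn⟩ := exists_nat_gt (-(U 1 ω))
      exact ⟨n, by push_neg; linarith⟩
    have htend : Tendsto (fun n : ℕ => μ {ω | U 1 ω ≤ -(n:ℝ)}) atTop (nhds 0) := by
      have := tendsto_measure_iInter_atTop hmeas' hanti ⟨0, measure_ne_top μ _⟩
      rwa [hempty, measure_empty] at this
    have : ENNReal.ofReal (1 - δ) ≤ 0 :=
      ge_of_tendsto' htend (fun n => hall n)
    exact absurd this (by simpa using hofpos.ne')
  -- q ∈ Sq (right-continuity of the CDF)
  have hqmem : q ∈ Sq := by
    have hmeas' : ∀ n : ℕ, NullMeasurableSet {ω | U 1 ω ≤ q + 1/((n:ℝ)+1)} μ :=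
      fun n => ((hmeas 1) measurableSet_Iic).nullMeasurableSet
    have hanti : Antitone (fun n : ℕ => {ω | U 1 ω ≤ q + 1/((n:ℝ)+1)}) := by
      intro m n hmn ω hω
      simp only [Set.mem_setOf_eq] at *
      have h1 : 1/((n:ℝ)+1) ≤ 1/((m:ℝ)+1) := by
        apply one_div_le_one_div_of_le (by positivity)
        linarith [(Nat.cast_le (α := ℝ)).2 hmn]
      linarith
    have hiInter : (⋂ n : ℕ, {ω | U 1 ω ≤ q + 1/((n:ℝ)+1)}) = {ω | U 1 ω ≤ q} := by
      ext ω
      simp only [Set.mem_iInter, Set.mem_setOf_eq]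
      constructor
      · intro h
        by_contra hc
        push_neg at hc
        obtain ⟨n, hn⟩ := exists_nat_one_div_lt (sub_pos.2 hc)
        have := h n
        linarith
      · intro h n
        have : (0:ℝ) < 1/((n:ℝ)+1) := by positivity
        linarith
    have htend : Tendsto (fun n : ℕ => μ {ω | U 1 ω ≤ q + 1/((n:ℝ)+1)}) atTop
        (nhds (μ {ω | U 1 ω ≤ q})) := by
      have := tendsto_measure_iInter_atTop hmeas' hanti ⟨0, measure_ne_top μ _⟩
      rwa [hiInter] at this
    refine ge_of_tendsto' htend (fun n => ?_)
    have hlt : sInf Sq < q + 1/((n:ℝ)+1) := by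
      have : (0:ℝ) < 1/((n:ℝ)+1) := by positivity
      have hq' : sInf Sq = q := rfl
      linarith [hq'.le]
    obtain ⟨u, hu, hul⟩ := exists_lt_of_csInf_lt hSqne hlt
    exact hSqmono u _ hul.le hu
  -- q ≤ 0
  have hq0 : q ≤ 0 := csInf_le hSqbdd h0mem
  -- upper-tail probability
  set s0 : Set Ω := {ω | q < U 1 ω} with hs0def
  have hs0 : MeasurableSet s0 := measurableSet_lt measurable_const (hmeas 1)
  set p : ℝ := (μ s0).toReal with hpdef
  have hple : p ≤ δ := by
    have hcompl : s0 = {ω | U 1 ω ≤ q}ᶜ := by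
      ext ω; simp [hs0def, not_le]
    have hmc : μ s0 = 1 - μ {ω | U 1 ω ≤ q} := by
      rw [hcompl, measure_compl (measurableSet_le (hmeas 1) measurable_const)
        (measure_ne_top μ _), measure_univ]
    have h1 : (1 - δ : ℝ) ≤ (μ {ω | U 1 ω ≤ q}).toReal := by
      have := ENNReal.toReal_mono (measure_ne_top μ _) hqmem
      rwa [ENNReal.toReal_ofReal (by linarith)] at this
    have h2 : (μ s0).toReal = 1 - (μ {ω | U 1 ω ≤ q}).toReal := by
      rw [hmc, ENNReal.toReal_sub_of_le prob_le_one ENNReal.one_ne_top, ENNReal.toReal_one]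
    rw [hpdef, h2]
    linarith
  -- the truncated function and its integral
  have hfint : Integrable (fun ω => max (U 1 ω - q) 0) μ :=
    (hint.sub (integrable_const q)).pos_part
  set If : ℝ := ∫ ω, max (U 1 ω - q) 0 ∂μ with hIfdef
  set RHS : ℝ := ∫ ω', Set.indicator {ω'' | rvQuantile μ (U 1) (1 - δ) < U 1 ω''} (U 1) ω' ∂μ
    with hRHSdef
  have hIfeq : If = RHS - q * p := by
    have hfun : (fun ω => max (U 1 ω - q) 0) = s0.indicator (fun ω => U 1 ω - q) := by
      funext ω
      by_cases h : q < U 1 ω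
      · have hm : ω ∈ s0 := h
        rw [Set.indicator_of_mem hm, max_eq_left (by linarith)]
      · have hm : ω ∉ s0 := h
        rw [Set.indicator_of_notMem hm, max_eq_right (by push_neg at h; linarith)]
    have hsub : ∫ ω in s0, (U 1 ω - q) ∂μ = (∫ ω in s0, U 1 ω ∂μ) - (μ s0).toReal * q := by
      rw [integral_sub (hint.restrict) (integrable_const q), setIntegral_const, smul_eq_mul]; rfl
    have hRHS' : RHS = ∫ ω in s0, U 1 ω ∂μ := by
      rw [hRHSdef, integral_indicator hs0]
    rw [hIfdef, hfun, integral_indicator hs0, hsub, hRHS', hpdef]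
    ring
  have hfinal : If + q * δ ≤ RHS := by
    have : q * δ ≤ q * p := mul_le_mul_of_nonpos_left hple hq0
    rw [hIfeq]; linarith
  -- SLLN for the truncated variables
  have hfmeas : Measurable (fun x : ℝ => max (x - q) 0) :=
    (measurable_id.sub_const q).max measurable_const
  set X : ℕ → Ω → ℝ := fun i ω => max (U (i+1) ω - q) 0 with hXdef
  have hXint : Integrable (X 0) μ := hfint
  have hXindep : Pairwise (Function.onFun (fun x1 x2 => IndepFun x1 x2 μ) X) := by
    intro i j hij
    exact (hindep.indepFun (show i+1 ≠ j+1 by omega)).comp hfmeas hfmeas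
  have hXident : ∀ i, IdentDistrib (X i) (X 0) μ μ := fun i =>
    ((hident (i+1)).comp hfmeas).trans ((hident 1).comp hfmeas).symm
  have hSLLN1 := strong_law_ae_real X hXint hXindep hXident
  set Y : ℕ → Ω → ℝ := fun i ω => U (i+1) ω with hYdef
  have hYint : Integrable (Y 0) μ := hint
  have hYindep : Pairwise (Function.onFun (fun x1 x2 => IndepFun x1 x2 μ) Y) := by
    intro i j hij
    exact hindep.indepFun (show i+1 ≠ j+1 by omega)
  have hYident : ∀ i, IdentDistrib (Y i) (Y 0) μ μ := fun i =>
    (hident (i+1)).trans (hident 1).symm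
  have hSLLN2 := strong_law_ae_real Y hYint hYindep hYident
  have haeall : ∀ᵐ ω ∂μ, ∀ t, U t ω ≤ 0 := ae_all_iff.2 hnonpos
  -- the pointwise argument
  filter_upwards [hSLLN1, hSLLN2, hliminf, haeall] with ω h1 h2 h3 h4
  -- rewriting the sums over Icc as sums over range
  have hsum : ∀ (g : ℕ → ℝ) (n : ℕ),
      ∑ t ∈ Finset.Icc 1 n, g t = ∑ i ∈ Finset.range n, g (i+1) := by
    intro g n
    rw [← Finset.Ico_add_one_right_eq_Icc, Finset.sum_Ico_eq_sum_range]
    simp only [Nat.add_sub_cancel]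
    exact Finset.sum_congr rfl fun i _ => by rw [Nat.add_comm]
  -- limit of δseq
  set L : ℝ := ⨆ n, δseq n ω with hLdef
  have hLtendsto : Tendsto (fun n => δseq n ω) atTop (nhds L) := by
    apply tendsto_atTop_ciSup (hδmono ω)
    exact ⟨1, by rintro x ⟨n, rfl⟩; exact (hδ01 n ω).2⟩
  have hδL : δ ≤ L := by rwa [hLtendsto.liminf_eq] at h3
  -- the sequences
  set B : ℕ → ℝ := fun n => (1/(n:ℝ)) * ∑ t ∈ Finset.Icc 1 n, max (U t ω - q) 0 with hBdef
  set D : ℕ → ℝ := fun n => (1/(n:ℝ)) * ∑ t ∈ Finset.Icc 1 n, U t ω with hDdef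
  set A : ℕ → ℝ := fun n => B n + q * δseq n ω with hAdef
  have hBtend : Tendsto B atTop (nhds If) := by
    have : B = fun n : ℕ => (∑ i ∈ Finset.range n, X i ω) / n := by
      funext n
      rw [hBdef]
      simp only [hsum (fun t => max (U t ω - q) 0) n, one_div, hXdef]
      rw [inv_mul_eq_div]
    rw [this]
    exact h1
  have hDtend : Tendsto D atTop (nhds (∫ x, U 1 x ∂μ)) := by
    have : D = fun n : ℕ => (∑ i ∈ Finset.range n, Y i ω) / n := by
      funext n
      rw [hDdef]
      simp only [hsum (fun t => U t ω) n, one_div, hYdef]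
      rw [inv_mul_eq_div]
    rw [this]
    exact h2
  have hAtend : Tendsto A atTop (nhds (If + q * L)) :=
    hBtend.add (hLtendsto.const_mul q)
  -- the sets
  set s : ℕ → Set ℝ := fun n => {v : ℝ | ∃ S : Finset ℕ, S ⊆ Finset.Icc 1 n ∧
      δseq n ω * n ≤ (S.card : ℝ) ∧ v = (1 / (n : ℝ)) * ∑ t ∈ S, U t ω} with hsdef
  have hDmem : ∀ n, D n ∈ s n := by
    intro n
    refine ⟨Finset.Icc 1 n, Finset.Subset.refl _, ?_, rfl⟩
    rw [Nat.card_Icc]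
    simp only [Nat.add_sub_cancel]
    calc δseq n ω * n ≤ 1 * n := by
          apply mul_le_mul_of_nonneg_right (hδ01 n ω).2 (Nat.cast_nonneg n)
      _ = (n:ℝ) := one_mul _
  have hbound : ∀ n, 1 ≤ n → ∀ v ∈ s n, v ≤ A n := by
    rintro n hn v ⟨S, hSsub, hScard, rfl⟩
    have hn0 : (n:ℝ) ≠ 0 := Nat.cast_ne_zero.2 (by omega)
    have hnpos : (0:ℝ) < n := by positivity
    have hstep1 : ∑ t ∈ S, U t ω ≤ (∑ t ∈ S, max (U t ω - q) 0) + q * S.card := by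
      have : ∀ t ∈ S, U t ω ≤ max (U t ω - q) 0 + q := by
        intro t _
        have := le_max_left (U t ω - q) 0
        linarith
      calc ∑ t ∈ S, U t ω ≤ ∑ t ∈ S, (max (U t ω - q) 0 + q) := Finset.sum_le_sum this
        _ = (∑ t ∈ S, max (U t ω - q) 0) + q * S.card := by
            rw [Finset.sum_add_distrib, Finset.sum_const, nsmul_eq_mul, mul_comm]
    have hstep2 : ∑ t ∈ S, max (U t ω - q) 0 ≤ ∑ t ∈ Finset.Icc 1 n, max (U t ω - q) 0 :=
      Finset.sum_le_sum_of_subset_of_nonneg hSsub (fun i _ _ => le_max_right _ 0)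
    have hstep3 : q * S.card ≤ q * (δseq n ω * n) := mul_le_mul_of_nonpos_left hScard hq0
    have : ∑ t ∈ S, U t ω ≤ (∑ t ∈ Finset.Icc 1 n, max (U t ω - q) 0) + q * (δseq n ω * n) := by
      linarith
    calc (1 / (n : ℝ)) * ∑ t ∈ S, U t ω
        ≤ (1 / (n : ℝ)) * ((∑ t ∈ Finset.Icc 1 n, max (U t ω - q) 0) + q * (δseq n ω * n)) :=
          mul_le_mul_of_nonneg_left this (by positivity)
      _ = A n := by
          rw [hAdef, hBdef]
          field_simp
  have hub : ∀ᶠ n in atTop, sSup (s n) ≤ A n := by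
    filter_upwards [eventually_ge_atTop 1] with n hn
    exact csSup_le ⟨D n, hDmem n⟩ (hbound n hn)
  have hlb : ∀ᶠ n in atTop, D n ≤ sSup (s n) := by
    filter_upwards [eventually_ge_atTop 1] with n hn
    exact le_csSup ⟨A n, hbound n hn⟩ (hDmem n)
  have hcobdd : IsCoboundedUnder (fun x1 x2 => x1 ≤ x2) atTop (fun n => sSup (s n)) :=
    ((hDtend.isBoundedUnder_ge).mono_ge hlb).isCoboundedUnder_le
  calc limsup (fun n => sSup (s n)) atTop
      ≤ limsup A atTop := limsup_le_limsup hub hcobdd (hAtend.isBoundedUnder_le)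
    _ = If + q * L := hAtend.limsup_eq
    _ ≤ If + q * δ := by
        have : q * L ≤ q * δ := mul_le_mul_of_nonpos_left hδL hq0
        linarith
    _ ≤ RHS := hfinal
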